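/- Let N ≥ 1 and let H : ℝ → M_N(ℂ) be continuously differentiable with H(t) invertible for every t. Let A : ℝ → M_N(ℂ) be differentiable with A(0) = Id and A'(t) = −(1/2) A(t) H'(t) H(t)⁻¹ for all t. If g ∈ M_N(ℂ) satisfies g H(t) = H(t) g for all t ∈ ℝ, then g A(t) = A(t) g for all t ∈ ℝ. -/

import Mathlib

open Matrix

section Aux

variable {N : ℕ}

/-- Entries of the inverse matrix are continuous, given entrywise continuity and
invertibility. -/
lemma aux_inv_entry_cont (H : ℝ → Matrix (Fin N) (Fin N) ℂ)
    (hHinv : ∀ t, IsUnit (H t)) (hc : ∀ i j, Continuous fun t => H t i j)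
    (i j : Fin N) : Continuous fun t => (H t)⁻¹ i j := by
  have cH : Continuous fun t => H t := continuous_matrix fun i j => hc i j
  have cdet : Continuous fun t => (H t).det := cH.matrix_det
  have hne : ∀ t, (H t).det ≠ 0 := fun t =>
    IsUnit.ne_zero ((Matrix.isUnit_iff_isUnit_det (H t)).mp (hHinv t))
  have cinv : Continuous fun t => ((H t).det)⁻¹ := cdet.inv₀ hne
  have cadj : Continuous fun t => (H t).adjugate i j :=
    (cH.matrix_adjugate).matrix_elem i j
  have : (fun t => (H t)⁻¹ i j) = fun t => ((H t).det)⁻¹ * (H t).adjugate i j := by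
    funext t
    rw [Matrix.inv_def, Matrix.smul_apply, Ring.inverse_eq_inv', smul_eq_mul]
  rw [this]
  exact cinv.mul cadj

end Aux

section Main

attribute [local instance] Matrix.linftyOpNormedRing Matrix.linftyOpNormedSpace

variable {N : ℕ}

lemma aux_hasDerivAt_of_entries {f : ℝ → Matrix (Fin N) (Fin N) ℂ}
    {M : Matrix (Fin N) (Fin N) ℂ} {t : ℝ}
    (h : ∀ i j, HasDerivAt (fun s => f s i j) (M i j) t) :
    HasDerivAt f M t := by
  have h1 : HasDerivAt
      (fun s => ∑ i : Fin N, ∑ j : Fin N, f s i j • Matrix.single i j (1 : ℂ))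
      (∑ i : Fin N, ∑ j : Fin N, M i j • Matrix.single i j (1 : ℂ)) t :=
    HasDerivAt.fun_sum fun i _ => HasDerivAt.fun_sum fun j _ => (h i j).smul_const _
  have key : ∀ (X : Matrix (Fin N) (Fin N) ℂ),
      (∑ i : Fin N, ∑ j : Fin N, X i j • Matrix.single i j (1 : ℂ)) = X := by
    intro X
    conv_rhs => rw [matrix_eq_sum_single X]
    refine Finset.sum_congr rfl fun i _ => Finset.sum_congr rfl fun j _ => ?_
    rw [smul_single, smul_eq_mul, mul_one]
  have h2 : (fun s => ∑ i : Fin N, ∑ j : Fin N, f s i j • Matrix.single i j (1 : ℂ))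
      = f := funext fun s => key (f s)
  rw [h2, key M] at h1
  exact h1

lemma aux_continuous_of_entries {f : ℝ → Matrix (Fin N) (Fin N) ℂ}
    (h : ∀ i j, Continuous fun t => f t i j) : Continuous f := by
  have key : ∀ (X : Matrix (Fin N) (Fin N) ℂ),
      (∑ i : Fin N, ∑ j : Fin N, X i j • Matrix.single i j (1 : ℂ)) = X := by
    intro X
    conv_rhs => rw [matrix_eq_sum_single X]
    refine Finset.sum_congr rfl fun i _ => Finset.sum_congr rfl fun j _ => ?_
    rw [smul_single, smul_eq_mul, mul_one]
  have : f = fun t => ∑ i : Fin N, ∑ j : Fin N, f t i j • Matrix.single i j (1 : ℂ) :=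
    funext fun t => (key (f t)).symm
  rw [this]
  exact continuous_finset_sum _ fun i _ => continuous_finset_sum _ fun j _ =>
    (h i j).smul continuous_const

/-- Let `H : ℝ → M_N(ℂ)` be continuously differentiable with `H t` invertible,
and let `A : ℝ → M_N(ℂ)` be differentiable with `A 0 = 1` and
`A' t = -(1/2) A t * H' t * (H t)⁻¹`. If `g` commutes with every `H t`, then `g` commutes
with every `A t`. -/
theorem stmt_4 (N : ℕ) (hN : 1 ≤ N)
    (H H' A A' : ℝ → Matrix (Fin N) (Fin N) ℂ)
    (hHinv : ∀ t, IsUnit (H t))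
    (hH : ∀ t i j, HasDerivAt (fun s => H s i j) (H' t i j) t)
    (hH'cont : ∀ i j, Continuous fun t => H' t i j)
    (hA : ∀ t i j, HasDerivAt (fun s => A s i j) (A' t i j) t)
    (hA0 : A 0 = 1)
    (hODE : ∀ t, A' t = (-(1/2) : ℂ) • (A t * H' t * (H t)⁻¹))
    (g : Matrix (Fin N) (Fin N) ℂ)
    (hg : ∀ t, g * H t = H t * g) :
    ∀ t, g * A t = A t * g := by
  classical
  have hdet : ∀ t, IsUnit (H t).det := fun t =>
    (Matrix.isUnit_iff_isUnit_det (H t)).mp (hHinv t)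
  -- g commutes with (H t)⁻¹
  have hgHinv : ∀ t, g * (H t)⁻¹ = (H t)⁻¹ * g := by
    intro t
    have h1 : g * (H t)⁻¹ = (H t)⁻¹ * (H t * g * (H t)⁻¹) := by
      rw [mul_assoc (H t) g, Matrix.nonsing_inv_mul_cancel_left _ _ (hdet t)]
    rw [← hg t, mul_assoc g, Matrix.mul_nonsing_inv _ (hdet t), mul_one] at h1
    exact h1
  -- g commutes with H' t
  have hgH' : ∀ t, g * H' t = H' t * g := by
    intro t
    ext i j
    have h1 : HasDerivAt (fun s => (g * H s) i j) ((g * H' t) i j) t := by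
      simp only [Matrix.mul_apply]
      exact HasDerivAt.fun_sum fun k _ => (hH t k j).const_mul (g i k)
    have h2 : HasDerivAt (fun s => (H s * g) i j) ((H' t * g) i j) t := by
      simp only [Matrix.mul_apply]
      exact HasDerivAt.fun_sum fun k _ => (hH t i k).mul_const (g k j)
    have h3 : (fun s => (g * H s) i j) = fun s => (H s * g) i j :=
      funext fun s => by rw [hg s]
    rw [h3] at h1
    exact h1.unique h2
  -- the coefficient matrix
  set B : ℝ → Matrix (Fin N) (Fin N) ℂ :=
    fun s => (-(1/2) : ℂ) • (H' s * (H s)⁻¹) with hBdef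
  have hgB : ∀ s, H' s * (H s)⁻¹ * g = g * (H' s * (H s)⁻¹) := by
    intro s
    rw [mul_assoc, ← hgHinv s, ← mul_assoc, ← hgH' s, mul_assoc]
  have cB : Continuous B := by
    apply aux_continuous_of_entries
    intro i j
    have : (fun t => B t i j) =
        fun t => (-(1/2) : ℂ) * ∑ k, H' t i k * (H t)⁻¹ k j := by
      funext t
      simp [hBdef, Matrix.smul_apply, Matrix.mul_apply, smul_eq_mul]
    rw [this]
    refine continuous_const.mul (continuous_finset_sum _ fun k _ => ?_)
    exact (hH'cont i k).mul
      (aux_inv_entry_cont H hHinv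
        (fun i j => (continuous_iff_continuousAt.mpr fun t => (hH t i j).continuousAt)) k j)
  intro T
  set a : ℝ := -(|T| + 1) with ha
  set b : ℝ := |T| + 1 with hb
  -- bound for B on [a, b]
  obtain ⟨C, hC⟩ := (isCompact_Icc (a := a) (b := b)).exists_bound_of_continuousOn
    cB.continuousOn
  set K : NNReal := C.toNNReal with hK
  have hBK : ∀ s ∈ Set.Icc a b, ‖B s‖ ≤ (K : ℝ) := fun s hs =>
    (hC s hs).trans (Real.le_coe_toNNReal C)
  -- truncated vector field
  set v : ℝ → Matrix (Fin N) (Fin N) ℂ → Matrix (Fin N) (Fin N) ℂ :=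
    fun s X => X * (if s ∈ Set.Icc a b then B s else 0) with hv
  have hvlip : ∀ s, LipschitzOnWith K (v s)
      (Set.univ : Set (Matrix (Fin N) (Fin N) ℂ)) := by
    intro s
    apply LipschitzWith.lipschitzOnWith
    apply LipschitzWith.of_dist_le_mul
    intro X Y
    have hBn : ‖(if s ∈ Set.Icc a b then B s else 0)‖ ≤ (K : ℝ) := by
      split_ifs with h
      · exact hBK s h
      · simp
    calc dist (v s X) (v s Y)
        = ‖(X - Y) * (if s ∈ Set.Icc a b then B s else 0)‖ := by
          rw [dist_eq_norm, hv, ← sub_mul]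
      _ ≤ ‖X - Y‖ * ‖(if s ∈ Set.Icc a b then B s else 0)‖ := norm_mul_le _ _
      _ ≤ ‖X - Y‖ * (K : ℝ) := by
          exact mul_le_mul_of_nonneg_left hBn (norm_nonneg _)
      _ = (K : ℝ) * dist X Y := by rw [dist_eq_norm, mul_comm]
  -- the two solutions
  set f1 : ℝ → Matrix (Fin N) (Fin N) ℂ := fun s => g * A s with hf1def
  set f2 : ℝ → Matrix (Fin N) (Fin N) ℂ := fun s => A s * g with hf2def
  have hf1d : ∀ s, HasDerivAt f1 (g * A' s) s := by
    intro s
    apply aux_hasDerivAt_of_entries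
    intro i j
    simp only [hf1def, Matrix.mul_apply]
    exact HasDerivAt.fun_sum fun k _ => (hA s k j).const_mul (g i k)
  have hf2d : ∀ s, HasDerivAt f2 (A' s * g) s := by
    intro s
    apply aux_hasDerivAt_of_entries
    intro i j
    simp only [hf2def, Matrix.mul_apply]
    exact HasDerivAt.fun_sum fun k _ => (hA s i k).mul_const (g k j)
  have halg1 : ∀ s, g * A' s = (f1 s) * B s := by
    intro s
    rw [hODE s, hf1def, hBdef]
    rw [mul_smul_comm, mul_smul_comm]
    congr 1
    simp only [mul_assoc]
  have halg2 : ∀ s, A' s * g = (f2 s) * B s := by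
    intro s
    rw [hODE s, hf2def, hBdef]
    rw [smul_mul_assoc, mul_smul_comm]
    congr 1
    rw [mul_assoc (A s) (H' s), mul_assoc (A s), hgB s, ← mul_assoc]
  have hmem : ∀ s ∈ Set.Ioo a b, s ∈ Set.Icc a b := fun s hs => Set.Ioo_subset_Icc_self hs
  have ht0 : (0 : ℝ) ∈ Set.Ioo a b := by
    constructor
    · rw [ha]; have := abs_nonneg T; linarith
    · rw [hb]; have := abs_nonneg T; linarith
  have key : Set.EqOn f1 f2 (Set.Icc a b) := by
    refine ODE_solution_unique_of_mem_Icc (fun s _ => hvlip s) ht0 ?_ ?_ (fun _ _ => trivial) ?_ ?_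
      (fun _ _ => trivial) ?_
    · exact (continuous_iff_continuousAt.mpr fun s => (hf1d s).continuousAt).continuousOn
    · intro s hs
      have := hf1d s
      rwa [halg1 s, show f1 s * B s = v s (f1 s) by rw [hv]; simp [hmem s hs]] at this
    · exact (continuous_iff_continuousAt.mpr fun s => (hf2d s).continuousAt).continuousOn
    · intro s hs
      have := hf2d s
      rwa [halg2 s, show f2 s * B s = v s (f2 s) by rw [hv]; simp [hmem s hs]] at this
    · show f1 0 = f2 0
      rw [hf1def, hf2def]
      simp [hA0]
  have hT : T ∈ Set.Icc a b := by
    constructor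
    · rw [ha]; have := neg_abs_le T; linarith
    · rw [hb]; have := le_abs_self T; linarith
  exact key hT

end Main
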